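/- Let A ∈ ℝ^{n×d} have a singular value decomposition A = U Σ Vᵀ, let ε > 0, let j ∈ {1,…,d−1}, and let m be an integer with m ≥ j + ⌈j/ε⌉ − 1 and m ≤ min(n,d) − 1. Let X ∈ ℝ^{d×j} be a matrix with orthonormal columns and let Y ∈ ℝ^{d×(d−j)} be a matrix with orthonormal columns whose column space is the orthogonal complement of the column space of X. Then 0 ≤ ‖AXXᵀ − A^(m)XXᵀ‖_F² ≤ ε · ‖AY‖_F². -/

import Mathlib

open Matrix

/-- Identify a plain vector in `Fin d → ℝ` with a point of Euclidean space `ℝ^d`. -/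
noncomputable def toEuc {d : ℕ} (v : Fin d → ℝ) : EuclideanSpace ℝ (Fin d) :=
  (WithLp.equiv 2 (Fin d → ℝ)).symm v

/-- Squared Euclidean distance from a point (given as a row vector) to a set. -/
noncomputable def rowDistSq {d : ℕ} (p : Fin d → ℝ) (C : Set (EuclideanSpace ℝ (Fin d))) : ℝ :=
  (Metric.infDist (toEuc p) C) ^ 2

/-- `dist²(A, C)`: sum of squared Euclidean distances of the rows of `A` to the set `C`. -/
noncomputable def matDistSq {n d : ℕ} (A : Matrix (Fin n) (Fin d) ℝ)
    (C : Set (EuclideanSpace ℝ (Fin d))) : ℝ :=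
  ∑ i, rowDistSq (A i) C

/-- Squared Frobenius norm of a matrix. -/
noncomputable def frobSq {n d : ℕ} (A : Matrix (Fin n) (Fin d) ℝ) : ℝ :=
  ∑ i, ∑ j, (A i j) ^ 2

/-- The rectangular diagonal `n × d` matrix with diagonal entries `σ 0, σ 1, …`. -/
def svdDiag (n d : ℕ) (σ : ℕ → ℝ) : Matrix (Fin n) (Fin d) ℝ :=
  Matrix.of fun i j => if (i : ℕ) = (j : ℕ) then σ (i : ℕ) else 0

/-- The truncation keeping only the first `m` diagonal entries of `svdDiag n d σ`. -/
def svdDiagTrunc (n d m : ℕ) (σ : ℕ → ℝ) : Matrix (Fin n) (Fin d) ℝ :=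
  Matrix.of fun i j => if (i : ℕ) = (j : ℕ) ∧ (i : ℕ) < m then σ (i : ℕ) else 0

/-- The column space of a matrix, as a subspace of Euclidean space. -/
noncomputable def colSpace {d c : ℕ} (X : Matrix (Fin d) (Fin c) ℝ) :
    Submodule ℝ (EuclideanSpace ℝ (Fin d)) :=
  Submodule.span ℝ (Set.range fun k => toEuc fun i => X i k)

lemma frobSq_eq_trace {n d : ℕ} (A : Matrix (Fin n) (Fin d) ℝ) :
    frobSq A = (Aᵀ * A).trace := by
  simp only [frobSq, Matrix.trace, Matrix.diag, Matrix.mul_apply, Matrix.transpose_apply]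
  rw [Finset.sum_comm]
  congr 1; ext i; congr 1; ext k; ring

lemma frobSq_mul_left {n n' d : ℕ} (U : Matrix (Fin n) (Fin n') ℝ) (hU : Uᵀ * U = 1)
    (B : Matrix (Fin n') (Fin d) ℝ) : frobSq (U * B) = frobSq B := by
  rw [frobSq_eq_trace, frobSq_eq_trace, Matrix.transpose_mul]
  rw [show Bᵀ * Uᵀ * (U * B) = Bᵀ * (Uᵀ * U) * B by simp [Matrix.mul_assoc], hU,
    Matrix.mul_one]

lemma frobSq_mul_right {n d c : ℕ} (X : Matrix (Fin d) (Fin c) ℝ) (hX : Xᵀ * X = 1)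
    (B : Matrix (Fin n) (Fin c) ℝ) : frobSq (B * Xᵀ) = frobSq B := by
  rw [frobSq_eq_trace, frobSq_eq_trace, Matrix.transpose_mul, Matrix.transpose_transpose]
  rw [show X * Bᵀ * (B * Xᵀ) = X * (Bᵀ * B) * Xᵀ by simp [Matrix.mul_assoc]]
  rw [Matrix.trace_mul_cycle, hX, Matrix.one_mul]

lemma frobSq_diagmul {n d c : ℕ} (D : Matrix (Fin n) (Fin d) ℝ) (g : Fin d → ℝ)
    (hD : Dᵀ * D = Matrix.diagonal g) (W : Matrix (Fin d) (Fin c) ℝ) :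
    frobSq (D * W) = ∑ l, g l * ∑ k, (W l k) ^ 2 := by
  rw [frobSq_eq_trace, Matrix.transpose_mul,
    show Wᵀ * Dᵀ * (D * W) = Wᵀ * (Dᵀ * D) * W by simp [Matrix.mul_assoc], hD]
  simp only [Matrix.trace, Matrix.diag, Matrix.mul_apply, Matrix.transpose_apply,
    Matrix.diagonal_apply]
  rw [Finset.sum_comm]
  congr 1; ext l
  rw [Finset.mul_sum]
  congr 1; ext k
  rw [Finset.sum_eq_single l (by intro b _ hb; simp [hb]) (by simp)]
  simp; ring

lemma diagP_tmul {n d : ℕ} (s : ℕ → ℝ) (P : ℕ → Prop) [DecidablePred P] :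
    (Matrix.of fun (i : Fin n) (l : Fin d) =>
        if (i : ℕ) = (l : ℕ) ∧ P (i : ℕ) then s (i : ℕ) else 0)ᵀ *
      (Matrix.of fun (i : Fin n) (l : Fin d) =>
        if (i : ℕ) = (l : ℕ) ∧ P (i : ℕ) then s (i : ℕ) else 0) =
    Matrix.diagonal (fun l : Fin d => if (l : ℕ) < n ∧ P (l : ℕ) then s (l : ℕ) ^ 2 else 0) := by
  ext l l'
  simp only [Matrix.mul_apply, Matrix.transpose_apply, Matrix.of_apply, Matrix.diagonal_apply]
  by_cases hl : (l : ℕ) < n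
  · rw [Finset.sum_eq_single ⟨(l : ℕ), hl⟩]
    · by_cases he : l = l'
      · subst he
        by_cases hP : P (l : ℕ) <;> simp [hP, hl, pow_two]
      · have : ((l : ℕ) : ℕ) ≠ (l' : ℕ) := fun h => he (Fin.ext h)
        simp [he, this]
    · intro i _ hi
      have : (i : ℕ) ≠ (l : ℕ) := fun h => hi (Fin.ext h)
      simp [this]
    · simp
  · have hz : ∀ i : Fin n, ¬ ((i : ℕ) = (l : ℕ)) := fun i h => hl (h ▸ i.isLt)
    simp only [hz, false_and, if_false, zero_mul, Finset.sum_const_zero]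
    simp [hl]

lemma XtY_eq_zero {d j j' : ℕ} (X : Matrix (Fin d) (Fin j) ℝ)
    (Y : Matrix (Fin d) (Fin j') ℝ)
    (hcomp : colSpace Y = (colSpace X)ᗮ) : Xᵀ * Y = 0 := by
  ext k l
  have hx : (toEuc fun i => X i k) ∈ colSpace X :=
    Submodule.subset_span ⟨k, rfl⟩
  have hy : (toEuc fun i => Y i l) ∈ (colSpace X)ᗮ := by
    rw [← hcomp]; exact Submodule.subset_span ⟨l, rfl⟩
  have := hy _ hx
  simp only [Matrix.mul_apply, Matrix.transpose_apply, Matrix.zero_apply]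
  rw [← this]
  simp [PiLp.inner_apply, RCLike.inner_apply, toEuc, mul_comm]

lemma outer_sum_one {d j j' : ℕ} (hj : d = j + j') (W : Matrix (Fin d) (Fin j) ℝ)
    (Z : Matrix (Fin d) (Fin j') ℝ)
    (hW : Wᵀ * W = 1) (hZ : Zᵀ * Z = 1) (hWZ : Wᵀ * Z = 0) :
    W * Wᵀ + Z * Zᵀ = 1 := by
  have hZW : Zᵀ * W = 0 := by
    have := congrArg Matrix.transpose hWZ
    simpa using this
  have e : Fin d ≃ Fin j ⊕ Fin j' :=
    (finCongr hj).trans finSumFinEquiv.symm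
  have h1 : Matrix.fromRows Wᵀ Zᵀ * Matrix.fromCols W Z = 1 := by
    rw [Matrix.fromRows_mul_fromCols, hW, hZ, hWZ, hZW, Matrix.fromBlocks_one]
  have h2 := (Matrix.fromCols_mul_fromRows_eq_one_comm e W Z Wᵀ Zᵀ).mpr h1
  rwa [Matrix.fromCols_mul_fromRows] at h2

lemma count_ite {d a b : ℕ} (hb : b ≤ d) :
    ∑ l : Fin d, (if a ≤ (l : ℕ) ∧ (l : ℕ) < b then (1 : ℝ) else 0) = (b - a : ℕ) := by
  rw [Finset.sum_boole]
  norm_cast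
  rw [show (Finset.univ.filter fun l : Fin d => a ≤ (l : ℕ) ∧ (l : ℕ) < b).card
      = (Finset.Ico a b).card from ?_, Nat.card_Ico]
  apply Finset.card_bij (fun (l : Fin d) _ => (l : ℕ))
  · intro l hl
    simp only [Finset.mem_filter] at hl
    exact Finset.mem_Ico.mpr hl.2
  · intro l₁ h₁ l₂ h₂ h
    exact Fin.ext h
  · intro x hx
    rw [Finset.mem_Ico] at hx
    exact ⟨⟨x, lt_of_lt_of_le hx.2 hb⟩, by simp [hx.1, hx.2], rfl⟩


set_option maxHeartbeats 1000000 in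
/-- with `A = U Σ Vᵀ` an SVD, `ε > 0`, `1 ≤ j ≤ d-1`,
`j + ⌈j/ε⌉ - 1 ≤ m ≤ min(n,d) - 1`, `X ∈ ℝ^{d×j}` with orthonormal columns and
`Y ∈ ℝ^{d×(d-j)}` with orthonormal columns spanning the orthogonal complement of the
column space of `X`: `0 ≤ ‖AXXᵀ - A^(m)XXᵀ‖_F² ≤ ε·‖AY‖_F²`. -/
theorem stmt7 {n d j : ℕ} (A : Matrix (Fin n) (Fin d) ℝ)
    (U : Matrix (Fin n) (Fin n) ℝ) (V : Matrix (Fin d) (Fin d) ℝ) (σ : ℕ → ℝ)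
    (hU : Uᵀ * U = 1) (hV : Vᵀ * V = 1)
    (hσ0 : ∀ i, i < min n d → 0 ≤ σ i)
    (hσa : ∀ i i', i ≤ i' → i' < min n d → σ i' ≤ σ i)
    (hA : A = U * svdDiag n d σ * Vᵀ)
    (ε : ℝ) (hε : 0 < ε) (hj1 : 1 ≤ j) (hj2 : j < d)
    (m : ℕ) (hm1 : j + ⌈(j : ℝ) / ε⌉₊ - 1 ≤ m) (hm2 : m + 1 ≤ min n d)
    (X : Matrix (Fin d) (Fin j) ℝ) (hX : Xᵀ * X = 1)
    (Y : Matrix (Fin d) (Fin (d - j)) ℝ) (hY : Yᵀ * Y = 1)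
    (hcomp : colSpace Y = (colSpace X)ᗮ) :
    0 ≤ frobSq (A * X * Xᵀ - U * svdDiagTrunc n d m σ * Vᵀ * X * Xᵀ) ∧
      frobSq (A * X * Xᵀ - U * svdDiagTrunc n d m σ * Vᵀ * X * Xᵀ) ≤
        ε * frobSq (A * Y) := by
  constructor
  · apply Finset.sum_nonneg; intro i _; apply Finset.sum_nonneg; intro k _; positivity
  -- basic index facts
  have hmn : m < n := lt_of_lt_of_le (Nat.lt_succ_self m) (le_trans hm2 (min_le_left n d))
  have hmd : m < d := lt_of_lt_of_le (Nat.lt_succ_self m) (le_trans hm2 (min_le_right n d))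
  have hmmin : m < min n d := lt_of_lt_of_le (Nat.lt_succ_self m) hm2
  have hceil : 1 ≤ ⌈(j : ℝ) / ε⌉₊ := by
    rw [Nat.one_le_ceil_iff]
    positivity
  have hjm : j ≤ m := by omega
  have hjmin : j < min n d := lt_of_le_of_lt hjm hmmin
  -- orthogonality setup
  have hVV : V * Vᵀ = 1 := mul_eq_one_comm.mp hV
  set W : Matrix (Fin d) (Fin j) ℝ := Vᵀ * X with hWdef
  set Z : Matrix (Fin d) (Fin (d - j)) ℝ := Vᵀ * Y with hZdef
  have hW : Wᵀ * W = 1 := by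
    rw [hWdef, Matrix.transpose_mul, Matrix.transpose_transpose,
      show Xᵀ * V * (Vᵀ * X) = Xᵀ * (V * Vᵀ) * X by simp [Matrix.mul_assoc], hVV,
      Matrix.mul_one, hX]
  have hZ : Zᵀ * Z = 1 := by
    rw [hZdef, Matrix.transpose_mul, Matrix.transpose_transpose,
      show Yᵀ * V * (Vᵀ * Y) = Yᵀ * (V * Vᵀ) * Y by simp [Matrix.mul_assoc], hVV,
      Matrix.mul_one, hY]
  have hXY : Xᵀ * Y = 0 := XtY_eq_zero X Y hcomp
  have hWZ : Wᵀ * Z = 0 := by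
    rw [hWdef, hZdef, Matrix.transpose_mul, Matrix.transpose_transpose,
      show Xᵀ * V * (Vᵀ * Y) = Xᵀ * (V * Vᵀ) * Y by simp [Matrix.mul_assoc], hVV,
      Matrix.mul_one, hXY]
  have hone : W * Wᵀ + Z * Zᵀ = 1 := outer_sum_one (by omega) W Z hW hZ hWZ
  -- row norms
  set r : Fin d → ℝ := fun l => ∑ k, (W l k) ^ 2 with hrdef
  set ρ : Fin d → ℝ := fun l => ∑ k, (Z l k) ^ 2 with hρdef
  have hr0 : ∀ l, 0 ≤ r l := fun l => Finset.sum_nonneg fun k _ => sq_nonneg _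
  have hρ0 : ∀ l, 0 ≤ ρ l := fun l => Finset.sum_nonneg fun k _ => sq_nonneg _
  have hrρ : ∀ l, r l + ρ l = 1 := by
    intro l
    have := congrFun (congrFun hone l) l
    simp only [Matrix.add_apply, Matrix.mul_apply, Matrix.transpose_apply,
      Matrix.one_apply_eq] at this
    simpa [hrdef, hρdef, pow_two] using this
  have hsumr : ∑ l, r l = (j : ℝ) := by
    have : ∑ l, r l = ∑ k, (Wᵀ * W) k k := by
      simp only [hrdef, Matrix.mul_apply, Matrix.transpose_apply, pow_two]
      exact Finset.sum_comm
    rw [this, hW]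
    simp
  -- diagonal matrices
  set g : Fin d → ℝ := fun l => if (l : ℕ) < n then σ (l : ℕ) ^ 2 else 0 with hgdef
  set gE : Fin d → ℝ := fun l => if (l : ℕ) < n ∧ m ≤ (l : ℕ) then σ (l : ℕ) ^ 2 else 0
    with hgEdef
  have hSdiag : (svdDiag n d σ)ᵀ * svdDiag n d σ = Matrix.diagonal g := by
    rw [show svdDiag n d σ = Matrix.of fun (i : Fin n) (l : Fin d) =>
        if (i : ℕ) = (l : ℕ) ∧ (fun _ : ℕ => True) (i : ℕ) then σ (i : ℕ) else 0 by
      ext i l; simp [svdDiag]]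
    rw [diagP_tmul σ (fun _ => True)]
    congr 1; ext l; simp [hgdef]
  have hE : svdDiag n d σ - svdDiagTrunc n d m σ = Matrix.of fun (i : Fin n) (l : Fin d) =>
      if (i : ℕ) = (l : ℕ) ∧ (fun i' : ℕ => m ≤ i') (i : ℕ) then σ (i : ℕ) else 0 := by
    ext i l
    simp only [Matrix.sub_apply, svdDiag, svdDiagTrunc, Matrix.of_apply]
    split_ifs <;> (try (exfalso; omega)) <;> ring
  have hEdiag : (svdDiag n d σ - svdDiagTrunc n d m σ)ᵀ *
      (svdDiag n d σ - svdDiagTrunc n d m σ) = Matrix.diagonal gE := by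
    rw [hE]
    exact diagP_tmul σ (fun i' => m ≤ i')
  -- compute the two Frobenius norms
  have hLHS : frobSq (A * X * Xᵀ - U * svdDiagTrunc n d m σ * Vᵀ * X * Xᵀ)
      = ∑ l, gE l * r l := by
    have hM : A * X * Xᵀ - U * svdDiagTrunc n d m σ * Vᵀ * X * Xᵀ
        = U * ((svdDiag n d σ - svdDiagTrunc n d m σ) * W) * Xᵀ := by
      rw [hA, hWdef]
      simp only [Matrix.sub_mul, Matrix.mul_sub, Matrix.mul_assoc]
    rw [hM, frobSq_mul_right X hX, frobSq_mul_left U hU,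
      frobSq_diagmul _ gE hEdiag]
  have hRHS : frobSq (A * Y) = ∑ l, g l * ρ l := by
    have hM : A * Y = U * (svdDiag n d σ * Z) := by
      rw [hA, hZdef]; simp only [Matrix.mul_assoc]
    rw [hM, frobSq_mul_left U hU, frobSq_diagmul _ g hSdiag]
  rw [hLHS, hRHS]
  -- scalar estimates
  have hσm0 : 0 ≤ σ m := hσ0 m hmmin
  have step1 : ∑ l, gE l * r l ≤ σ m ^ 2 * (j : ℝ) := by
    calc ∑ l, gE l * r l ≤ ∑ l, σ m ^ 2 * r l := by
          apply Finset.sum_le_sum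
          intro l _
          by_cases hc : (l : ℕ) < n ∧ m ≤ (l : ℕ)
          · have hlmin : (l : ℕ) < min n d := lt_min hc.1 l.isLt
            have h1 : σ (l : ℕ) ≤ σ m := hσa m (l : ℕ) hc.2 hlmin
            have h2 : 0 ≤ σ (l : ℕ) := hσ0 _ hlmin
            have : σ (l : ℕ) ^ 2 ≤ σ m ^ 2 := by nlinarith
            simp only [hgEdef, hc, if_true]
            exact mul_le_mul_of_nonneg_right this (hr0 l)
          · have hz : gE l = 0 := by simp only [hgEdef]; simp [hc]
            rw [hz, zero_mul]
            exact mul_nonneg (sq_nonneg _) (hr0 l)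
      _ = σ m ^ 2 * (j : ℝ) := by rw [← Finset.mul_sum, hsumr]
  have hσj0 : 0 ≤ σ j := hσ0 j hjmin
  have step2 : ∑ l : Fin d, (if j ≤ (l : ℕ) then g l else 0) ≤ ∑ l, g l * ρ l := by
    have key : ∀ l : Fin d,
        σ j ^ 2 * ((if (l : ℕ) < j then (1 : ℝ) else 0) - r l)
          + (if j ≤ (l : ℕ) then g l else 0) ≤ g l * ρ l := by
      intro l
      have hρr : ρ l = 1 - r l := by have := hrρ l; linarith
      by_cases hl : (l : ℕ) < j
      · have hln : (l : ℕ) < n := lt_of_lt_of_le hl (le_trans hjm (le_of_lt hmn))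
        have hlmin : (l : ℕ) < min n d := lt_min hln l.isLt
        have h1 : σ j ≤ σ (l : ℕ) := hσa (l : ℕ) j (le_of_lt hl) hjmin
        have h2 : 0 ≤ σ (l : ℕ) := hσ0 _ hlmin
        have hg : σ j ^ 2 ≤ g l := by
          simp only [hgdef, hln, if_true]; nlinarith
        rw [if_pos hl, if_neg (not_le.mpr hl)]
        have : σ j ^ 2 * ρ l ≤ g l * ρ l :=
          mul_le_mul_of_nonneg_right hg (hρ0 l)
        rw [hρr] at this ⊢
        linarith
      · push_neg at hl
        have hg : g l ≤ σ j ^ 2 := by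
          by_cases hln : (l : ℕ) < n
          · have hlmin : (l : ℕ) < min n d := lt_min hln l.isLt
            have h1 : σ (l : ℕ) ≤ σ j := hσa j (l : ℕ) hl hlmin
            have h2 : 0 ≤ σ (l : ℕ) := hσ0 _ hlmin
            simp only [hgdef, hln, if_true]; nlinarith
          · simp only [hgdef, hln, if_false]; positivity
        rw [if_neg (not_lt.mpr hl), if_pos hl]
        have : g l * r l ≤ σ j ^ 2 * r l :=
          mul_le_mul_of_nonneg_right hg (hr0 l)
        rw [hρr]
        ring_nf
        nlinarith [this]
      done
    have hsum := Finset.sum_le_sum (fun l (_ : l ∈ Finset.univ) => key l)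
    rw [Finset.sum_add_distrib, ← Finset.mul_sum, Finset.sum_sub_distrib, hsumr] at hsum
    have hcount : ∑ l : Fin d, (if (l : ℕ) < j then (1 : ℝ) else 0) = (j : ℝ) := by
      have := count_ite (d := d) (a := 0) (b := j) (le_of_lt hj2)
      simpa using this
    rw [hcount] at hsum
    simpa using hsum
  have step3 : ((m + 1 - j : ℕ) : ℝ) * σ m ^ 2 ≤ ∑ l : Fin d, (if j ≤ (l : ℕ) then g l else 0) := by
    have h1 : ∑ l : Fin d, (if j ≤ (l : ℕ) ∧ (l : ℕ) < m + 1 then (1 : ℝ) else 0) * σ m ^ 2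
        ≤ ∑ l : Fin d, (if j ≤ (l : ℕ) then g l else 0) := by
      apply Finset.sum_le_sum
      intro l _
      by_cases hc : j ≤ (l : ℕ) ∧ (l : ℕ) < m + 1
      · have hln : (l : ℕ) < n := lt_of_lt_of_le hc.2 (le_trans hm2 (min_le_left n d))
        have hlmin : (l : ℕ) < min n d := lt_min hln l.isLt
        have hml : σ m ≤ σ (l : ℕ) := hσa (l : ℕ) m (by omega) hmmin
        simp only [hc, if_true, hc.1, hgdef, hln, one_mul]
        norm_num
        nlinarith [hσ0 _ hlmin]
      · simp only [hc, if_false, zero_mul]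
        by_cases hj' : j ≤ (l : ℕ)
        · simp only [hj', if_true, hgdef]
          split_ifs with h
          · positivity
          · exact le_rfl
        · simp [hj']
    calc ((m + 1 - j : ℕ) : ℝ) * σ m ^ 2
        = (∑ l : Fin d, (if j ≤ (l : ℕ) ∧ (l : ℕ) < m + 1 then (1 : ℝ) else 0)) * σ m ^ 2 := by
          rw [count_ite (by omega : m + 1 ≤ d)]
      _ = ∑ l : Fin d, (if j ≤ (l : ℕ) ∧ (l : ℕ) < m + 1 then (1 : ℝ) else 0) * σ m ^ 2 := by
          rw [Finset.sum_mul]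
      _ ≤ _ := h1
  -- final arithmetic
  have hcount2 : (j : ℝ) ≤ ε * ((m + 1 - j : ℕ) : ℝ) := by
    have h1 : (⌈(j : ℝ) / ε⌉₊ : ℝ) ≤ ((m + 1 - j : ℕ) : ℝ) := by
      have : ⌈(j : ℝ) / ε⌉₊ ≤ m + 1 - j := by omega
      exact_mod_cast this
    have h2 : (j : ℝ) / ε ≤ (⌈(j : ℝ) / ε⌉₊ : ℝ) := Nat.le_ceil _
    have h3 : (j : ℝ) / ε ≤ ((m + 1 - j : ℕ) : ℝ) := le_trans h2 h1
    calc (j : ℝ) = ε * ((j : ℝ) / ε) := by field_simp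
      _ ≤ ε * ((m + 1 - j : ℕ) : ℝ) := mul_le_mul_of_nonneg_left h3 (le_of_lt hε)
  calc ∑ l, gE l * r l ≤ σ m ^ 2 * (j : ℝ) := step1
    _ ≤ σ m ^ 2 * (ε * ((m + 1 - j : ℕ) : ℝ)) :=
        mul_le_mul_of_nonneg_left hcount2 (by positivity)
    _ = ε * (((m + 1 - j : ℕ) : ℝ) * σ m ^ 2) := by ring
    _ ≤ ε * ∑ l : Fin d, (if j ≤ (l : ℕ) then g l else 0) :=
        mul_le_mul_of_nonneg_left step3 (le_of_lt hε)
    _ ≤ ε * ∑ l, g l * ρ l := mul_le_mul_of_nonneg_left step2 (le_of_lt hε)
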